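/- arXiv:2207.10427 — 2 statements merged into one kernel-verified Lean document; each statement's English description precedes it below -/
import Mathlib

section
/- Let J, N_p ∈ ℕ with J ≥ 1. For each variable index i ∈ {1,…,J} let x_{i,p} ∈ ℝ and y_{i,p} > 0 (p ∈ {1,…,N_p}) be particle positions and weights with ∑_{p=1}^{N_p} y_{i,p} = 1, let the prior factorize as positive functions p_i : ℝ → ℝ_{>0}, and let the likelihood ℓ : ℝ^J → ℝ_{>0} be positive. Define the full mean-field objective L := ∑_{p_1=1}^{N_p} ⋯ ∑_{p_J=1}^{N_p} (∏_{i=1}^{J} y_{i,p_i}) · [ ∑_{i=1}^{J} ln y_{i,p_i} − ∑_{i=1}^{J} ln p_i(x_{i,p_i}) − ln ℓ(x_{1,p_1},…,x_{J,p_J}) ]. Then for every fixed j ∈ {1,…,J}, L = ∑_{p=1}^{N_p} y_{j,p} ln y_{j,p} − ∑_{p=1}^{N_p} y_{j,p} [ ln p_j(x_{j,p}) + ∑_{(p_i)_{i≠j}} (∏_{i≠j} y_{i,p_i}) ln ℓ(x_{1,p_1},…,x_{j−1,p_{j−1}}, x_{j,p}, x_{j+1,p_{j+1}},…,x_{J,p_J})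 ] + C_j, where the constant C_j := ∑_{i≠j} ∑_{p=1}^{N_p} y_{i,p} ( ln y_{i,p} − ln p_i(x_{i,p}) ) does not depend on the block (x_{j,·}, y_{j,·}). -/
open Finset

private lemma sum_split' {α β : Type*} [Fintype α] [DecidableEq α] [Fintype β]
    (a : α) (F : (α → β) → ℝ) :
    ∑ σ : α → β, F σ
      = ∑ b : β, ∑ τ : {i : α // i ≠ a} → β,
          F (fun i => if h : i = a then b else τ ⟨i, h⟩) := by
  rw [← (Equiv.funSplitAt a β).symm.sum_comp F, Fintype.sum_prod_type]
  refine Finset.sum_congr rfl fun b _ => Finset.sum_congr rfl fun τ _ => ?_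
  congr 1
  funext i
  simp [Equiv.funSplitAt, Equiv.piSplitAt]

private lemma sum_prod_weights' {α β : Type*} [Fintype α] [DecidableEq α] [Fintype β]
    (u : α → β → ℝ) (hu : ∀ a, ∑ b, u a b = 1) :
    ∑ τ : α → β, ∏ a, u a (τ a) = 1 := by
  rw [← Fintype.prod_sum u]
  simp [hu]

private lemma marg' {α β : Type*} [Fintype α] [DecidableEq α] [Fintype β]
    (u : α → β → ℝ) (hu : ∀ a, ∑ b, u a b = 1) (a : α) (g : β → ℝ) :
    ∑ τ : α → β, (∏ b, u b (τ b)) * g (τ a) = ∑ q, u a q * g q := by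
  rw [sum_split' a]
  refine Finset.sum_congr rfl fun q _ => ?_
  beta_reduce
  have hprod : ∀ τ : {i : α // i ≠ a} → β,
      (∏ b, u b (if h : b = a then q else τ ⟨b, h⟩))
        = u a q * ∏ b : {i : α // i ≠ a}, u b.1 (τ b) := by
    intro τ
    rw [← Finset.mul_prod_erase univ _ (mem_univ a), dif_pos rfl]
    congr 1
    rw [Finset.prod_subtype (Finset.univ.erase a) (p := fun i => i ≠ a) (fun i => by simp)
      (fun i => u i (if h : i = a then q else τ ⟨i, h⟩))]
    exact Finset.prod_congr rfl fun i _ => by simp [i.2]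
  have hga : ∀ τ : {i : α // i ≠ a} → β,
      (if h : a = a then q else τ ⟨a, h⟩) = q := fun τ => dif_pos rfl
  calc ∑ τ : {i : α // i ≠ a} → β,
        (∏ b, u b (if h : b = a then q else τ ⟨b, h⟩))
          * g (if h : a = a then q else τ ⟨a, h⟩)
      = ∑ τ : {i : α // i ≠ a} → β,
          (u a q * g q) * ∏ b : {i : α // i ≠ a}, u b.1 (τ b) := by
        refine Finset.sum_congr rfl fun τ _ => ?_
        rw [hprod τ, hga τ]; ring
    _ = u a q * g q := by
        rw [← Finset.mul_sum, sum_prod_weights' (fun b : {i : α // i ≠ a} => u b.1)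
          (fun b => hu b.1)]
        ring

private lemma sum_marg' {α β : Type*} [Fintype α] [DecidableEq α] [Fintype β]
    (u : α → β → ℝ) (hu : ∀ a, ∑ b, u a b = 1) (g : α → β → ℝ) :
    ∑ τ : α → β, (∏ b, u b (τ b)) * (∑ a, g a (τ a)) = ∑ a, ∑ q, u a q * g a q := by
  calc ∑ τ : α → β, (∏ b, u b (τ b)) * (∑ a, g a (τ a))
      = ∑ τ : α → β, ∑ a, (∏ b, u b (τ b)) * g a (τ a) := by
        exact Finset.sum_congr rfl fun τ _ => Finset.mul_sum _ _ _
    _ = ∑ a, ∑ τ : α → β, (∏ b, u b (τ b)) * g a (τ a) := Finset.sum_comm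
    _ = ∑ a, ∑ q, u a q * g a q :=
        Finset.sum_congr rfl fun a _ => marg' u hu a (g a)

open Finset in
/-- Block decomposition of the full mean-field particle-based VBI objective:
for each fixed block `j`, the objective equals the `j`-th block objective
`L_j` plus a constant `C_j` not depending on the `j`-th block. -/
theorem mean_field_objective_block_decomposition
    (J Np : ℕ) (hJ : 1 ≤ J)
    (x : Fin J → Fin Np → ℝ) (y : Fin J → Fin Np → ℝ)
    (hy_pos : ∀ i p, 0 < y i p) (hy_sum : ∀ i, ∑ p, y i p = 1)
    (prior : Fin J → ℝ → ℝ) (hprior : ∀ i t, 0 < prior i t)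
    (ℓ : (Fin J → ℝ) → ℝ) (hℓ : ∀ v, 0 < ℓ v)
    (j : Fin J) :
    ∑ σ : Fin J → Fin Np,
        (∏ i, y i (σ i)) *
          ((∑ i, Real.log (y i (σ i))) - (∑ i, Real.log (prior i (x i (σ i))))
            - Real.log (ℓ (fun i => x i (σ i))))
      = (∑ p, y j p * Real.log (y j p))
        - (∑ p, y j p *
            (Real.log (prior j (x j p)) +
              ∑ σ : {i : Fin J // i ≠ j} → Fin Np,
                (∏ i, y i.1 (σ i)) *
                  Real.log (ℓ (fun i => if h : i = j then x j p else x i (σ ⟨i, h⟩)))))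
        + ∑ i ∈ Finset.univ.erase j, ∑ p, y i p * (Real.log (y i p) - Real.log (prior i (x i p))) := by
  classical
  have hu : ∀ i : {i : Fin J // i ≠ j}, ∑ q, y i.1 q = 1 := fun i => hy_sum i.1
  have hW1 : ∑ τ : {i : Fin J // i ≠ j} → Fin Np, ∏ i, y i.1 (τ i) = 1 :=
    sum_prod_weights' (fun i : {i : Fin J // i ≠ j} => y i.1) hu
  rw [sum_split' j]
  beta_reduce
  have key : ∀ (p : Fin Np) (τ : {i : Fin J // i ≠ j} → Fin Np),
      (∏ i, y i (if h : i = j then p else τ ⟨i, h⟩)) *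
        ((∑ i, Real.log (y i (if h : i = j then p else τ ⟨i, h⟩)))
          - (∑ i, Real.log (prior i (x i (if h : i = j then p else τ ⟨i, h⟩))))
          - Real.log (ℓ (fun i => x i (if h : i = j then p else τ ⟨i, h⟩))))
      = (y j p * ∏ i : {i : Fin J // i ≠ j}, y i.1 (τ i)) *
          ((Real.log (y j p) - Real.log (prior j (x j p)))
            + ((∑ i : {i : Fin J // i ≠ j}, Real.log (y i.1 (τ i))) - (∑ i : {i : Fin J // i ≠ j}, Real.log (prior i.1 (x i.1 (τ i)))))
            - Real.log (ℓ (fun i => if h : i = j then x j p else x i (τ ⟨i, h⟩)))) := by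
    intro p τ
    have e0 : (∏ i, y i (if h : i = j then p else τ ⟨i, h⟩))
        = y j p * ∏ i : {i : Fin J // i ≠ j}, y i.1 (τ i) := by
      rw [← Finset.mul_prod_erase univ _ (mem_univ j), dif_pos rfl]
      congr 1
      rw [Finset.prod_subtype (Finset.univ.erase j) (p := fun i => i ≠ j) (fun i => by simp)
        (fun i => y i (if h : i = j then p else τ ⟨i, h⟩))]
      exact Finset.prod_congr rfl fun i _ => by simp [i.2]
    have e1 : (∑ i, Real.log (y i (if h : i = j then p else τ ⟨i, h⟩)))
        = Real.log (y j p)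
          + ∑ i : {i : Fin J // i ≠ j}, Real.log (y i.1 (τ i)) := by
      rw [← Finset.add_sum_erase univ _ (mem_univ j), dif_pos rfl]
      congr 1
      rw [Finset.sum_subtype (Finset.univ.erase j) (p := fun i => i ≠ j) (fun i => by simp)
        (fun i => Real.log (y i (if h : i = j then p else τ ⟨i, h⟩)))]
      exact Finset.sum_congr rfl fun i _ => by simp [i.2]
    have e2 : (∑ i, Real.log (prior i (x i (if h : i = j then p else τ ⟨i, h⟩))))
        = Real.log (prior j (x j p))
          + ∑ i : {i : Fin J // i ≠ j}, Real.log (prior i.1 (x i.1 (τ i))) := by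
      rw [← Finset.add_sum_erase univ _ (mem_univ j), dif_pos rfl]
      congr 1
      rw [Finset.sum_subtype (Finset.univ.erase j) (p := fun i => i ≠ j) (fun i => by simp)
        (fun i => Real.log (prior i (x i (if h : i = j then p else τ ⟨i, h⟩))))]
      exact Finset.sum_congr rfl fun i _ => by simp [i.2]
    have ex : (fun i => x i (if h : i = j then p else τ ⟨i, h⟩))
        = fun i => if h : i = j then x j p else x i (τ ⟨i, h⟩) := by
      funext i
      by_cases h : i = j
      · subst h; simp
      · simp [h]
    rw [e0, e1, e2, ex]
    ring
  have h1 : ∑ p, ∑ τ : {i : Fin J // i ≠ j} → Fin Np,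
        (y j p * ∏ i : {i : Fin J // i ≠ j}, y i.1 (τ i))
          * (Real.log (y j p) - Real.log (prior j (x j p)))
      = ∑ p, y j p * (Real.log (y j p) - Real.log (prior j (x j p))) := by
    refine Finset.sum_congr rfl fun p _ => ?_
    calc ∑ τ : {i : Fin J // i ≠ j} → Fin Np,
          (y j p * ∏ i : {i : Fin J // i ≠ j}, y i.1 (τ i))
            * (Real.log (y j p) - Real.log (prior j (x j p)))
        = (y j p * (Real.log (y j p) - Real.log (prior j (x j p))))
            * ∑ τ : {i : Fin J // i ≠ j} → Fin Np, ∏ i : {i : Fin J // i ≠ j}, y i.1 (τ i) := by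
          rw [Finset.mul_sum]
          exact Finset.sum_congr rfl fun τ _ => by ring
      _ = y j p * (Real.log (y j p) - Real.log (prior j (x j p))) := by rw [hW1, mul_one]
  have h2 : ∑ p, ∑ τ : {i : Fin J // i ≠ j} → Fin Np,
        (y j p * ∏ i : {i : Fin J // i ≠ j}, y i.1 (τ i))
          * ((∑ i : {i : Fin J // i ≠ j}, Real.log (y i.1 (τ i))) - (∑ i : {i : Fin J // i ≠ j}, Real.log (prior i.1 (x i.1 (τ i)))))
      = ∑ i ∈ Finset.univ.erase j, ∑ p,
          y i p * (Real.log (y i p) - Real.log (prior i (x i p))) := by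
    have hK : ∑ τ : {i : Fin J // i ≠ j} → Fin Np,
          (∏ i : {i : Fin J // i ≠ j}, y i.1 (τ i))
            * ((∑ i : {i : Fin J // i ≠ j}, Real.log (y i.1 (τ i))) - (∑ i : {i : Fin J // i ≠ j}, Real.log (prior i.1 (x i.1 (τ i)))))
        = ∑ i : {i : Fin J // i ≠ j}, ∑ q,
            y i.1 q * (Real.log (y i.1 q) - Real.log (prior i.1 (x i.1 q))) := by
      rw [← sum_marg' (fun i : {i : Fin J // i ≠ j} => y i.1) hu
        (fun i q => Real.log (y i.1 q) - Real.log (prior i.1 (x i.1 q)))]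
      exact Finset.sum_congr rfl fun τ _ => by rw [Finset.sum_sub_distrib]
    calc ∑ p, ∑ τ : {i : Fin J // i ≠ j} → Fin Np,
          (y j p * ∏ i : {i : Fin J // i ≠ j}, y i.1 (τ i))
            * ((∑ i : {i : Fin J // i ≠ j}, Real.log (y i.1 (τ i))) - (∑ i : {i : Fin J // i ≠ j}, Real.log (prior i.1 (x i.1 (τ i)))))
        = ∑ p, y j p * ∑ τ : {i : Fin J // i ≠ j} → Fin Np,
            (∏ i : {i : Fin J // i ≠ j}, y i.1 (τ i))
              * ((∑ i : {i : Fin J // i ≠ j}, Real.log (y i.1 (τ i))) - (∑ i : {i : Fin J // i ≠ j}, Real.log (prior i.1 (x i.1 (τ i))))) := by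
          refine Finset.sum_congr rfl fun p _ => ?_
          rw [Finset.mul_sum]
          exact Finset.sum_congr rfl fun τ _ => by ring
      _ = (∑ p, y j p) * ∑ τ : {i : Fin J // i ≠ j} → Fin Np,
            (∏ i : {i : Fin J // i ≠ j}, y i.1 (τ i))
              * ((∑ i : {i : Fin J // i ≠ j}, Real.log (y i.1 (τ i))) - (∑ i : {i : Fin J // i ≠ j}, Real.log (prior i.1 (x i.1 (τ i))))) :=
          (Finset.sum_mul _ _ _).symm
      _ = ∑ i : {i : Fin J // i ≠ j}, ∑ q,
            y i.1 q * (Real.log (y i.1 q) - Real.log (prior i.1 (x i.1 q))) := by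
          rw [hy_sum j, one_mul, hK]
      _ = ∑ i ∈ Finset.univ.erase j, ∑ p,
            y i p * (Real.log (y i p) - Real.log (prior i (x i p))) :=
          (Finset.sum_subtype (Finset.univ.erase j) (p := fun i => i ≠ j) (fun i => by simp)
            (fun i => ∑ p, y i p * (Real.log (y i p) - Real.log (prior i (x i p))))).symm
  have h3 : ∑ p, ∑ τ : {i : Fin J // i ≠ j} → Fin Np,
        (y j p * ∏ i : {i : Fin J // i ≠ j}, y i.1 (τ i))
          * Real.log (ℓ (fun i => if h : i = j then x j p else x i (τ ⟨i, h⟩)))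
      = ∑ p, y j p * ∑ τ : {i : Fin J // i ≠ j} → Fin Np,
          (∏ i : {i : Fin J // i ≠ j}, y i.1 (τ i))
            * Real.log (ℓ (fun i => if h : i = j then x j p else x i (τ ⟨i, h⟩))) := by
    refine Finset.sum_congr rfl fun p _ => ?_
    rw [Finset.mul_sum]
    exact Finset.sum_congr rfl fun τ _ => by ring
  calc ∑ p, ∑ τ : {i : Fin J // i ≠ j} → Fin Np,
        (∏ i, y i (if h : i = j then p else τ ⟨i, h⟩)) *
          ((∑ i, Real.log (y i (if h : i = j then p else τ ⟨i, h⟩)))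
            - (∑ i, Real.log (prior i (x i (if h : i = j then p else τ ⟨i, h⟩))))
            - Real.log (ℓ (fun i => x i (if h : i = j then p else τ ⟨i, h⟩))))
      = ∑ p, ∑ τ : {i : Fin J // i ≠ j} → Fin Np,
          ((y j p * ∏ i : {i : Fin J // i ≠ j}, y i.1 (τ i))
              * (Real.log (y j p) - Real.log (prior j (x j p)))
            + (y j p * ∏ i : {i : Fin J // i ≠ j}, y i.1 (τ i))
              * ((∑ i : {i : Fin J // i ≠ j}, Real.log (y i.1 (τ i))) - (∑ i : {i : Fin J // i ≠ j}, Real.log (prior i.1 (x i.1 (τ i)))))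
            - (y j p * ∏ i : {i : Fin J // i ≠ j}, y i.1 (τ i))
              * Real.log (ℓ (fun i => if h : i = j then x j p else x i (τ ⟨i, h⟩)))) := by
        refine Finset.sum_congr rfl fun p _ => Finset.sum_congr rfl fun τ _ => ?_
        rw [key p τ]; ring
    _ = (∑ p, y j p * Real.log (y j p))
        - (∑ p, y j p *
            (Real.log (prior j (x j p)) +
              ∑ σ : {i : Fin J // i ≠ j} → Fin Np,
                (∏ i, y i.1 (σ i)) *
                  Real.log (ℓ (fun i => if h : i = j then x j p else x i (σ ⟨i, h⟩)))))
        + ∑ i ∈ Finset.univ.erase j, ∑ p,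
            y i p * (Real.log (y i p) - Real.log (prior i (x i p))) := by
        simp only [Finset.sum_add_distrib, Finset.sum_sub_distrib]
        rw [h1, h2, h3]
        simp only [mul_add, mul_sub, Finset.sum_add_distrib, Finset.sum_sub_distrib]
        ring
end

section
/- Let n ∈ ℕ, Γ > 0, C ≥ 0, L ≥ 0 and R ≥ 0. Let c₁, c₂, x₁, x₂ ∈ ℝⁿ with ‖c₂‖ ≤ C and ‖c₁ − c₂‖ ≤ L·‖x₁ − x₂‖, and consider the two quadratic surrogate functions f̄_i(x) = c_iᵀ(x − x_i) + Γ‖x − x_i‖² for i = 1, 2. Then for every x ∈ ℝⁿ with ‖x − x₁‖ ≤ R and ‖x − x₂‖ ≤ R, |f̄₁(x) − f̄₂(x)| ≤ (L·R + C + 2Γ·R) · ‖x₁ − x₂‖. -/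
/-- Two quadratic surrogates centered at two iterates `x₁, x₂`, whose gradient
estimates are bounded and Lipschitz in the iterates, differ by at most a constant
times `‖x₁ - x₂‖` uniformly on a bounded set. -/
theorem surrogate_lipschitz_in_iterate
    (n : ℕ) (Γ C L R : ℝ) (hΓ : 0 < Γ) (hC : 0 ≤ C) (hL : 0 ≤ L) (hR : 0 ≤ R)
    (c₁ c₂ x₁ x₂ : EuclideanSpace ℝ (Fin n))
    (hc₂ : ‖c₂‖ ≤ C) (hc : ‖c₁ - c₂‖ ≤ L * ‖x₁ - x₂‖)
    (f₁ f₂ : EuclideanSpace ℝ (Fin n) → ℝ)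
    (hf₁ : ∀ x, f₁ x = (inner ℝ c₁ (x - x₁) : ℝ) + Γ * ‖x - x₁‖ ^ 2)
    (hf₂ : ∀ x, f₂ x = (inner ℝ c₂ (x - x₂) : ℝ) + Γ * ‖x - x₂‖ ^ 2) :
    ∀ x : EuclideanSpace ℝ (Fin n), ‖x - x₁‖ ≤ R → ‖x - x₂‖ ≤ R →
      |f₁ x - f₂ x| ≤ (L * R + C + 2 * Γ * R) * ‖x₁ - x₂‖ := by
  intro x hx1 hx2
  have key : f₁ x - f₂ x =
      (inner ℝ (c₁ - c₂) (x - x₁) : ℝ) + (inner ℝ c₂ (x₂ - x₁) : ℝ)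
        + Γ * (‖x - x₁‖ ^ 2 - ‖x - x₂‖ ^ 2) := by
    rw [hf₁, hf₂]; simp only [inner_sub_left, inner_sub_right]
    ring
  rw [key]
  have hd : ‖x₂ - x₁‖ = ‖x₁ - x₂‖ := norm_sub_rev _ _
  have h1 : |(inner ℝ (c₁ - c₂) (x - x₁) : ℝ)| ≤ (L * ‖x₁ - x₂‖) * R := by
    calc |(inner ℝ (c₁ - c₂) (x - x₁) : ℝ)| ≤ ‖c₁ - c₂‖ * ‖x - x₁‖ :=
          abs_real_inner_le_norm _ _
      _ ≤ (L * ‖x₁ - x₂‖) * R := by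
          apply mul_le_mul hc hx1 (norm_nonneg _)
          positivity
  have h2 : |(inner ℝ c₂ (x₂ - x₁) : ℝ)| ≤ C * ‖x₁ - x₂‖ := by
    calc |(inner ℝ c₂ (x₂ - x₁) : ℝ)| ≤ ‖c₂‖ * ‖x₂ - x₁‖ := abs_real_inner_le_norm _ _
      _ ≤ C * ‖x₁ - x₂‖ := by rw [hd]; exact mul_le_mul_of_nonneg_right hc₂ (norm_nonneg _)
  have h3 : |‖x - x₁‖ ^ 2 - ‖x - x₂‖ ^ 2| ≤ 2 * R * ‖x₁ - x₂‖ := by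
    have hfac : ‖x - x₁‖ ^ 2 - ‖x - x₂‖ ^ 2
        = (‖x - x₁‖ - ‖x - x₂‖) * (‖x - x₁‖ + ‖x - x₂‖) := by ring
    rw [hfac, abs_mul]
    have ha : |‖x - x₁‖ - ‖x - x₂‖| ≤ ‖x₁ - x₂‖ := by
      have := abs_norm_sub_norm_le (x - x₁) (x - x₂)
      have h : (x - x₁) - (x - x₂) = x₂ - x₁ := by abel
      rw [h, hd] at this
      exact this
    have hb : |‖x - x₁‖ + ‖x - x₂‖| ≤ 2 * R := by
      rw [abs_of_nonneg (by positivity)]; linarith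
    calc |‖x - x₁‖ - ‖x - x₂‖| * |‖x - x₁‖ + ‖x - x₂‖|
        ≤ ‖x₁ - x₂‖ * (2 * R) := mul_le_mul ha hb (abs_nonneg _) (norm_nonneg _)
      _ = 2 * R * ‖x₁ - x₂‖ := by ring
  have h3' : |Γ * (‖x - x₁‖ ^ 2 - ‖x - x₂‖ ^ 2)| ≤ Γ * (2 * R * ‖x₁ - x₂‖) := by
    rw [abs_mul, abs_of_pos hΓ]
    exact mul_le_mul_of_nonneg_left h3 hΓ.le
  calc |(inner ℝ (c₁ - c₂) (x - x₁) : ℝ) + (inner ℝ c₂ (x₂ - x₁) : ℝ)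
        + Γ * (‖x - x₁‖ ^ 2 - ‖x - x₂‖ ^ 2)|
      ≤ |(inner ℝ (c₁ - c₂) (x - x₁) : ℝ)| + |(inner ℝ c₂ (x₂ - x₁) : ℝ)|
        + |Γ * (‖x - x₁‖ ^ 2 - ‖x - x₂‖ ^ 2)| := by
        exact (abs_add_le _ _).trans (by gcongr; exact abs_add_le _ _)
    _ ≤ (L * ‖x₁ - x₂‖) * R + C * ‖x₁ - x₂‖ + Γ * (2 * R * ‖x₁ - x₂‖) := by
        gcongr
    _ ≤ (L * R + C + 2 * Γ * R) * ‖x₁ - x₂‖ := by nlinarith [norm_nonneg (x₁ - x₂)]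
end
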